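/- Fix n ≥ 2 and complex numbers q_{ij} (1 ≤ i, j ≤ n) with q_{ii} = 1, q_{ji} = q_{ij}^{-1} and |q_{ij}| = 1. Let x be a word of length m over {1, …, n} in which the letter i occurs exactly k_i times (so k_1 + … + k_n = m), and let P_m = (1/m!) Σ_{σ ∈ S_m} U^{m,q}_σ on ℓ²({1, …, n}^m), where U^{m,q}_σ e_y = q^σ(y) e_{y ∘ σ^{-1}}. Then ⟨P_m e_x, e_x⟩ = (k_1! k_2! ⋯ k_n!)/m!; equivalently, ‖P_m e_x‖² = (k_1! ⋯ k_n!)/m!. -/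

import Mathlib

open scoped BigOperators

/-- `q^σ(x) = ∏ q_{x_{σ⁻¹(k)} x_{σ⁻¹(i)}}`, the product over all pairs `i < k`
with `σ⁻¹(i) > σ⁻¹(k)`. -/
noncomputable def qSigma {n : ℕ} (q : Fin n → Fin n → ℂ) {m : ℕ} (x : Fin m → Fin n)
    (σ : Equiv.Perm (Fin m)) : ℂ :=
  ∏ p ∈ Finset.univ.filter (fun p : Fin m × Fin m => p.1 < p.2 ∧ σ⁻¹ p.2 < σ⁻¹ p.1),
    q (x (σ⁻¹ p.2)) (x (σ⁻¹ p.1))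

/-- The operator `U^{m,q}_σ` on `ℓ²({1,…,n}^m)` with `U^{m,q}_σ e_x = q^σ(x) e_{x ∘ σ⁻¹}`. -/
noncomputable def Uop {n : ℕ} (q : Fin n → Fin n → ℂ) (m : ℕ) (σ : Equiv.Perm (Fin m)) :
    EuclideanSpace ℂ (Fin m → Fin n) →L[ℂ] EuclideanSpace ℂ (Fin m → Fin n) :=
  LinearMap.toContinuousLinearMap
    { toFun := fun f => WithLp.toLp 2 (fun y => qSigma q (fun i => y (σ i)) σ * f (fun i => y (σ i)))
      map_add' := by
        intro f g
        ext y
        simp [PiLp.add_apply, mul_add]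
      map_smul' := by
        intro c f
        ext y
        simp [PiLp.smul_apply, smul_eq_mul] <;> ring }

/-- The `q`-symmetrization operator `P_m = (1/m!) Σ_σ U^{m,q}_σ`. -/
noncomputable def Pm {n : ℕ} (q : Fin n → Fin n → ℂ) (m : ℕ) :
    EuclideanSpace ℂ (Fin m → Fin n) →L[ℂ] EuclideanSpace ℂ (Fin m → Fin n) :=
  ((m.factorial : ℂ))⁻¹ • ∑ σ : Equiv.Perm (Fin m), Uop q m σ

namespace Stmt9Aux

variable {n m : ℕ} (q : Fin n → Fin n → ℂ)

/-- a "half" of q -/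
def r (a b : Fin n) : ℂ := if a < b then q a b else 1

def Rprod (x : Fin m → Fin n) : ℂ :=
  ∏ p ∈ Finset.univ.filter (fun p : Fin m × Fin m => p.1 < p.2), r q (x p.1) (x p.2)

variable (hq1 : ∀ i, q i i = 1) (hq2 : ∀ i j, q j i = (q i j)⁻¹) (hq3 : ∀ i j, ‖q i j‖ = 1)

section
include hq3

lemma norm_r (a b : Fin n) : ‖r q a b‖ = 1 := by
  unfold r; split <;> simp [hq3]

lemma r_ne_zero (a b : Fin n) : r q a b ≠ 0 := by
  intro h
  have := norm_r q hq3 a b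
  rw [h] at this; simp at this

lemma norm_Rprod (x : Fin m → Fin n) : ‖Rprod q x‖ = 1 := by
  unfold Rprod
  rw [norm_prod]
  exact Finset.prod_eq_one fun p _ => norm_r q hq3 _ _

lemma Rprod_ne_zero (x : Fin m → Fin n) : Rprod q x ≠ 0 := by
  intro h
  have := norm_Rprod q hq3 x
  rw [h] at this; simp at this

include hq1 hq2

lemma q_eq_r (a b : Fin n) : q a b = r q a b * (r q b a)⁻¹ := by
  rcases lt_trichotomy a b with h | h | h
  · rw [r, r, if_pos h, if_neg (not_lt.2 h.le)]
    simp
  · subst h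
    rw [r, if_neg (lt_irrefl a)]
    simp [hq1]
  · rw [r, r, if_neg (not_lt.2 h.le), if_pos h, hq2]
    simp

end

lemma qSigma_reindex (x : Fin m → Fin n) (σ : Equiv.Perm (Fin m)) :
    qSigma q x σ = ∏ p ∈ Finset.univ.filter
        (fun p : Fin m × Fin m => p.1 < p.2 ∧ σ p.2 < σ p.1), q (x p.1) (x p.2) := by
  unfold qSigma
  refine Finset.prod_nbij' (fun p => (σ⁻¹ p.2, σ⁻¹ p.1)) (fun p => (σ p.2, σ p.1)) ?_ ?_ ?_ ?_ ?_
  · intro p hp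
    simp only [Finset.mem_filter, Finset.mem_univ, true_and] at hp ⊢
    exact ⟨hp.2, by simpa using hp.1⟩
  · intro p hp
    simp only [Finset.mem_filter, Finset.mem_univ, true_and] at hp ⊢
    exact ⟨hp.2, by simpa using hp.1⟩
  · intro p hp; simp
  · intro p hp; simp
  · intro p hp; rfl

include hq1 hq2 hq3 in
lemma qSigma_formula (x : Fin m → Fin n) (σ : Equiv.Perm (Fin m)) :
    qSigma q x σ = Rprod q x * (Rprod q (x ∘ ⇑σ⁻¹))⁻¹ := by
  classical
  rw [qSigma_reindex]
  set S1 : Finset (Fin m × Fin m) :=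
    Finset.univ.filter (fun p : Fin m × Fin m => p.1 < p.2 ∧ σ p.2 < σ p.1) with hS1
  set S2 : Finset (Fin m × Fin m) :=
    Finset.univ.filter (fun p : Fin m × Fin m => p.1 < p.2 ∧ σ p.1 < σ p.2) with hS2
  set S1' : Finset (Fin m × Fin m) :=
    Finset.univ.filter (fun p : Fin m × Fin m => p.2 < p.1 ∧ σ p.1 < σ p.2) with hS1'
  have hsplit : ∀ p : Fin m × Fin m, p.1 < p.2 → (σ p.2 < σ p.1 ↔ ¬ σ p.1 < σ p.2) := by
    intro p hp
    have hne : σ p.1 ≠ σ p.2 := fun h => absurd (σ.injective h) (ne_of_lt hp)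
    constructor
    · exact fun h => not_lt.2 h.le
    · intro h; exact lt_of_le_of_ne (not_lt.1 h) (Ne.symm hne)
  -- Rprod x = ∏_{S1} r * ∏_{S2} r
  have hR : Rprod q x = (∏ p ∈ S1, r q (x p.1) (x p.2)) * ∏ p ∈ S2, r q (x p.1) (x p.2) := by
    unfold Rprod
    rw [← Finset.prod_filter_mul_prod_filter_not
      (Finset.univ.filter (fun p : Fin m × Fin m => p.1 < p.2))
      (fun p => σ p.2 < σ p.1)]
    rw [Finset.filter_filter, Finset.filter_filter]
    congr 1
    refine Finset.prod_congr (Finset.filter_congr ?_) fun _ _ => rfl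
    intro p _
    exact and_congr_right fun h1 => by
      rw [hsplit p h1]; tauto
  -- split q into r-halves on S1
  have hQ : ∏ p ∈ S1, q (x p.1) (x p.2)
      = (∏ p ∈ S1, r q (x p.1) (x p.2)) * ∏ p ∈ S1, (r q (x p.2) (x p.1))⁻¹ := by
    rw [← Finset.prod_mul_distrib]
    exact Finset.prod_congr rfl fun p _ => q_eq_r q hq1 hq2 hq3 _ _
  -- swap reindex
  have hB : ∏ p ∈ S1, (r q (x p.2) (x p.1))⁻¹ = ∏ p ∈ S1', (r q (x p.1) (x p.2))⁻¹ := by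
    refine Finset.prod_nbij' Prod.swap Prod.swap ?_ ?_ ?_ ?_ ?_
    · intro p hp
      simp only [hS1, hS1', Finset.mem_filter, Finset.mem_univ, true_and] at hp ⊢
      exact ⟨hp.1, hp.2⟩
    · intro p hp
      simp only [hS1, hS1', Finset.mem_filter, Finset.mem_univ, true_and] at hp ⊢
      exact ⟨hp.1, hp.2⟩
    · intro p _; rfl
    · intro p _; rfl
    · intro p _; rfl
  -- the big inverse product splits
  have hT : ∏ p ∈ Finset.univ.filter (fun p : Fin m × Fin m => σ p.1 < σ p.2),
        (r q (x p.1) (x p.2))⁻¹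
      = (∏ p ∈ S2, (r q (x p.1) (x p.2))⁻¹) * ∏ p ∈ S1', (r q (x p.1) (x p.2))⁻¹ := by
    rw [← Finset.prod_filter_mul_prod_filter_not
      (Finset.univ.filter (fun p : Fin m × Fin m => σ p.1 < σ p.2))
      (fun p => p.1 < p.2)]
    rw [Finset.filter_filter, Finset.filter_filter]
    congr 1
    · refine Finset.prod_congr (Finset.filter_congr ?_) fun _ _ => rfl
      intro p _
      exact ⟨fun h => ⟨h.2, h.1⟩, fun h => ⟨h.2, h.1⟩⟩
    · refine Finset.prod_congr (Finset.filter_congr ?_) fun _ _ => rfl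
      intro p _
      constructor
      · rintro ⟨h1, h2⟩
        refine ⟨lt_of_le_of_ne (not_lt.1 h2) ?_, h1⟩
        intro h; exact absurd (congrArg σ h) (ne_of_gt h1)
      · rintro ⟨h1, h2⟩
        exact ⟨h2, not_lt.2 h1.le⟩
  -- identify the big inverse product with (Rprod y)⁻¹
  have hE : ∏ p ∈ Finset.univ.filter (fun p : Fin m × Fin m => σ p.1 < σ p.2),
        (r q (x p.1) (x p.2))⁻¹ = (Rprod q (x ∘ ⇑σ⁻¹))⁻¹ := by
    unfold Rprod
    rw [← Finset.prod_inv_distrib]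
    refine Finset.prod_nbij' (fun p => (σ p.1, σ p.2)) (fun p => (σ⁻¹ p.1, σ⁻¹ p.2)) ?_ ?_ ?_ ?_ ?_
    · intro p hp
      simp only [Finset.mem_filter, Finset.mem_univ, true_and] at hp ⊢
      exact hp
    · intro p hp
      simp only [Finset.mem_filter, Finset.mem_univ, true_and] at hp ⊢
      simpa using hp
    · intro p _; simp
    · intro p _; simp
    · intro p _; simp
  have hA2 : (∏ p ∈ S2, r q (x p.1) (x p.2)) ≠ 0 :=
    Finset.prod_ne_zero_iff.2 fun p _ => r_ne_zero q hq3 _ _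
  have hA2inv : ∏ p ∈ S2, (r q (x p.1) (x p.2))⁻¹ = (∏ p ∈ S2, r q (x p.1) (x p.2))⁻¹ :=
    Finset.prod_inv_distrib _
  rw [hQ, hB, hR, ← hE, hT, hA2inv]
  rw [mul_assoc, ← mul_assoc (∏ p ∈ S2, r q (x p.1) (x p.2)), mul_inv_cancel₀ hA2, one_mul]

include hq1 hq2 hq3 in
lemma qSigma_stab (x : Fin m → Fin n) (σ : Equiv.Perm (Fin m)) (h : x ∘ ⇑σ⁻¹ = x) :
    qSigma q x σ = 1 := by
  rw [qSigma_formula q hq1 hq2 hq3, h, mul_inv_cancel₀ (Rprod_ne_zero q hq3 x)]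

/-- the set of permutations carrying `x` to `y` -/
def Fib (x y : Fin m → Fin n) : Finset (Equiv.Perm (Fin m)) :=
  Finset.univ.filter (fun σ => x ∘ ⇑σ⁻¹ = y)

lemma Fib_x_card (x : Fin m → Fin n) :
    (Fib x x).card = ∏ i : Fin n, ((Finset.univ.filter fun p : Fin m => x p = i).card.factorial) := by
  have h1 : Fib x x = Finset.univ.filter (fun σ : Equiv.Perm (Fin m) => x ∘ ⇑σ = x) := by
    unfold Fib
    apply Finset.filter_congr
    intro σ _
    constructor
    · intro h
      funext j
      exact (by simpa using congrFun h (σ j) : x j = x (σ j)).symm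
    · intro h
      funext j
      exact (by simpa using congrFun h (σ⁻¹ j) : x j = x (σ⁻¹ j)).symm
  rw [h1, ← Fintype.card_subtype, DomMulAct.stabilizer_card]
  exact Finset.prod_congr rfl fun i _ => by rw [Fintype.card_subtype]

lemma Fib_card_of_mem (x y : Fin m → Fin n) (τ : Equiv.Perm (Fin m)) (hτ : τ ∈ Fib x y) :
    (Fib x y).card = (Fib x x).card := by
  simp only [Fib, Finset.mem_filter, Finset.mem_univ, true_and] at hτ
  apply Finset.card_bij' (fun σ _ => τ⁻¹ * σ) (fun ρ _ => τ * ρ)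
  · intro σ hσ
    simp only [Fib, Finset.mem_filter, Finset.mem_univ, true_and] at hσ ⊢
    funext j
    have h1 : x (σ⁻¹ (τ j)) = y (τ j) := congrFun hσ (τ j)
    have h2 : x j = y (τ j) := by simpa using congrFun hτ (τ j)
    show x ((τ⁻¹ * σ)⁻¹ j) = x j
    rw [show ((τ⁻¹ * σ)⁻¹ : Equiv.Perm (Fin m)) j = σ⁻¹ (τ j) by simp [mul_inv_rev]]
    exact h1.trans h2.symm
  · intro ρ hρ
    simp only [Fib, Finset.mem_filter, Finset.mem_univ, true_and] at hρ ⊢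
    funext j
    have h1 : x (ρ⁻¹ (τ⁻¹ j)) = x (τ⁻¹ j) := congrFun hρ (τ⁻¹ j)
    have h2 : x (τ⁻¹ j) = y j := congrFun hτ j
    show x ((τ * ρ)⁻¹ j) = y j
    rw [show ((τ * ρ)⁻¹ : Equiv.Perm (Fin m)) j = ρ⁻¹ (τ⁻¹ j) by simp [mul_inv_rev]]
    exact h1.trans h2
  · intro σ _; simp [← mul_assoc]
  · intro ρ _; simp [← mul_assoc]

lemma sum_Fib_card (x : Fin m → Fin n) :
    ∑ y : Fin m → Fin n, (Fib x y).card = m.factorial := by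
  have h := Finset.card_eq_sum_card_fiberwise
    (s := (Finset.univ : Finset (Equiv.Perm (Fin m))))
    (t := (Finset.univ : Finset (Fin m → Fin n)))
    (f := fun σ : Equiv.Perm (Fin m) => x ∘ ⇑σ⁻¹) (fun σ _ => Finset.mem_univ _)
  have h2 : (Finset.univ : Finset (Equiv.Perm (Fin m))).card = m.factorial := by
    rw [Finset.card_univ, Fintype.card_perm, Fintype.card_fin]
  rw [← h2, h]
  rfl

lemma sum_Fib_card_sq (x : Fin m → Fin n) :
    ∑ y : Fin m → Fin n, (Fib x y).card * (Fib x y).card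
      = (Fib x x).card * m.factorial := by
  rw [← sum_Fib_card x, Finset.mul_sum]
  apply Finset.sum_congr rfl
  intro y _
  rcases (Fib x y).eq_empty_or_nonempty with h | h
  · simp [h]
  · obtain ⟨τ, hτ⟩ := h
    rw [Fib_card_of_mem x y τ hτ]

lemma Pm_apply (f : EuclideanSpace ℂ (Fin m → Fin n)) (y : Fin m → Fin n) :
    (Pm q m f) y = ((m.factorial : ℂ))⁻¹ * ∑ σ : Equiv.Perm (Fin m),
      qSigma q (fun i => y (σ i)) σ * f (fun i => y (σ i)) := by
  simp only [Pm, ContinuousLinearMap.smul_apply, ContinuousLinearMap.sum_apply,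
    PiLp.smul_apply, smul_eq_mul, Uop, LinearMap.coe_toContinuousLinearMap',
    LinearMap.coe_mk, AddHom.coe_mk]
  congr 1
  simp [WithLp.ofLp_sum]

include hq1 hq2 hq3 in
lemma Pm_single_apply (x y : Fin m → Fin n) :
    (Pm q m (EuclideanSpace.single x (1 : ℂ))) y
      = ((m.factorial : ℂ))⁻¹ * (((Fib x y).card : ℂ) * (Rprod q x * (Rprod q y)⁻¹)) := by
  rw [Pm_apply]
  congr 1
  have key : ∀ σ : Equiv.Perm (Fin m),
      qSigma q (fun i => y (σ i)) σ * (EuclideanSpace.single x (1:ℂ)) (fun i => y (σ i))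
      = if x ∘ ⇑σ⁻¹ = y then Rprod q x * (Rprod q y)⁻¹ else 0 := by
    intro σ
    rw [EuclideanSpace.single_apply]
    by_cases h : (fun i => y (σ i)) = x
    · have h' : x ∘ ⇑σ⁻¹ = y := by
        funext j
        exact (by simpa using congrFun h (σ⁻¹ j) : y j = x (σ⁻¹ j)).symm
      rw [if_pos h, if_pos h', mul_one, h, qSigma_formula q hq1 hq2 hq3, h']
    · rw [if_neg h, mul_zero, if_neg ?_]
      intro hc
      apply h
      funext i
      exact (congrFun hc (σ i) : x (σ⁻¹ (σ i)) = y (σ i)).symm.trans (by simp)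
  rw [Finset.sum_congr rfl (fun σ _ => key σ)]
  rw [Finset.sum_ite, Finset.sum_const, Finset.sum_const_zero, add_zero]
  simp only [Fib, nsmul_eq_mul]

end Stmt9Aux

/-- If the letter `i` occurs exactly `k_i` times in the word `x` of length `m`, then
`⟨P_m e_x, e_x⟩ = (k_1! ⋯ k_n!)/m!`; equivalently `‖P_m e_x‖² = (k_1! ⋯ k_n!)/m!`. -/
theorem stmt9 {n : ℕ} (hn : 2 ≤ n) (q : Fin n → Fin n → ℂ)
    (hq1 : ∀ i, q i i = 1) (hq2 : ∀ i j, q j i = (q i j)⁻¹) (hq3 : ∀ i j, ‖q i j‖ = 1)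
    (m : ℕ) (x : Fin m → Fin n) :
    (inner ℂ (Pm q m (EuclideanSpace.single x 1)) (EuclideanSpace.single x (1 : ℂ)) : ℂ)
        = (∏ i : Fin n, ((Finset.univ.filter fun p : Fin m => x p = i).card.factorial : ℂ))
            / (m.factorial : ℂ) ∧
    ‖Pm q m (EuclideanSpace.single x 1)‖ ^ 2
        = (∏ i : Fin n, ((Finset.univ.filter fun p : Fin m => x p = i).card.factorial : ℝ))
            / (m.factorial : ℝ) := by
  have hKprod : (Stmt9Aux.Fib x x).card
      = ∏ i : Fin n, ((Finset.univ.filter fun p : Fin m => x p = i).card.factorial) :=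
    Stmt9Aux.Fib_x_card x
  have hmC : ((m.factorial : ℂ)) ≠ 0 := Nat.cast_ne_zero.2 m.factorial_ne_zero
  have hmR : ((m.factorial : ℝ)) ≠ 0 := Nat.cast_ne_zero.2 m.factorial_ne_zero
  constructor
  · rw [EuclideanSpace.inner_single_right, one_mul,
      Stmt9Aux.Pm_single_apply q hq1 hq2 hq3 x x,
      mul_inv_cancel₀ (Stmt9Aux.Rprod_ne_zero q hq3 x), mul_one]
    rw [map_mul, map_inv₀, map_natCast, map_natCast, hKprod]
    push_cast
    ring
  · have hnorm : ∀ y : Fin m → Fin n,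
        ‖(Pm q m (EuclideanSpace.single x (1 : ℂ))) y‖
          = ((m.factorial : ℝ))⁻¹ * ((Stmt9Aux.Fib x y).card : ℝ) := by
      intro y
      rw [Stmt9Aux.Pm_single_apply q hq1 hq2 hq3 x y]
      rw [norm_mul, norm_mul, norm_mul, norm_inv, norm_inv]
      simp [Stmt9Aux.norm_Rprod q hq3]
    rw [EuclideanSpace.norm_eq, Real.sq_sqrt (Finset.sum_nonneg fun y _ => sq_nonneg _)]
    have hsq : ∑ y : Fin m → Fin n, ((Stmt9Aux.Fib x y).card : ℝ) * ((Stmt9Aux.Fib x y).card : ℝ)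
        = ((Stmt9Aux.Fib x x).card : ℝ) * (m.factorial : ℝ) := by
      exact_mod_cast congrArg (Nat.cast : ℕ → ℝ) (Stmt9Aux.sum_Fib_card_sq x)
    calc ∑ y : Fin m → Fin n, ‖(Pm q m (EuclideanSpace.single x (1 : ℂ))) y‖ ^ 2
        = ∑ y : Fin m → Fin n, ((m.factorial : ℝ))⁻¹ * ((m.factorial : ℝ))⁻¹ *
            (((Stmt9Aux.Fib x y).card : ℝ) * ((Stmt9Aux.Fib x y).card : ℝ)) := by
          apply Finset.sum_congr rfl
          intro y _
          rw [hnorm y]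
          ring
      _ = ((m.factorial : ℝ))⁻¹ * ((m.factorial : ℝ))⁻¹ *
            (((Stmt9Aux.Fib x x).card : ℝ) * (m.factorial : ℝ)) := by
          rw [← Finset.mul_sum, hsq]
      _ = (∏ i : Fin n, ((Finset.univ.filter fun p : Fin m => x p = i).card.factorial : ℝ))
            / (m.factorial : ℝ) := by
          rw [hKprod]
          push_cast
          field_simp
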